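/- Let n ≥ 2 be an integer, m ≥ 1, and let E : F_m → Q_m(ℤ/nℤ)ˣ be the Magnus expansion into the reduced free algebra with coefficients in ℤ/nℤ. Then for every w ∈ F_m, every i ∈ {1,…,m} and every ε ∈ {1,−1}, one has E((w⁻¹ x_i^ε w)^n) = 1 in Q_m(ℤ/nℤ)ˣ. (This is Claim 4.2(1) of the paper: since φ'∘η'_q(a'^ε_{ij}) is a conjugate w⁻¹ α_i^ε w of a generator, the Magnus expansion of its n-th power is congruent to 1 + O(2) modulo n.) -/
import Mathlib


def ReducedRel (R : Type*) [CommRing R] (m : ℕ) :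
    FreeAlgebra R (Fin m) → FreeAlgebra R (Fin m) → Prop :=
  fun x y => ∃ (i : Fin m) (a : FreeAlgebra R (Fin m)),
    x = FreeAlgebra.ι R i * a * FreeAlgebra.ι R i ∧ y = 0

abbrev ReducedFreeAlgebra (R : Type*) [CommRing R] (m : ℕ) :=
  RingQuot (ReducedRel R m)

def ReducedFreeAlgebra.X (R : Type*) [CommRing R] (m : ℕ) (i : Fin m) :
    ReducedFreeAlgebra R m :=
  RingQuot.mkRingHom (ReducedRel R m) (FreeAlgebra.ι R i)

lemma ReducedFreeAlgebra.X_mul_X (R : Type*) [CommRing R] (m : ℕ) (i : Fin m) :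
    ReducedFreeAlgebra.X R m i * ReducedFreeAlgebra.X R m i = 0 := by
  have h : ReducedRel R m (FreeAlgebra.ι R i * 1 * FreeAlgebra.ι R i) 0 := ⟨i, 1, rfl, rfl⟩
  have h2 := RingQuot.mkRingHom_rel h
  simpa [ReducedFreeAlgebra.X, map_mul, map_one, map_zero] using h2

lemma ReducedFreeAlgebra.isNilpotent_X (R : Type*) [CommRing R] (m : ℕ) (i : Fin m) :
    IsNilpotent (ReducedFreeAlgebra.X R m i) :=
  ⟨2, by rw [pow_two, ReducedFreeAlgebra.X_mul_X]⟩

/-- The Magnus expansion `E : F_m → Q_m(R)ˣ`, `E(x i) = 1 + X i`. -/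
noncomputable def magnus (R : Type*) [CommRing R] (m : ℕ) :
    FreeGroup (Fin m) →* (ReducedFreeAlgebra R m)ˣ :=
  FreeGroup.lift fun i =>
    ((ReducedFreeAlgebra.isNilpotent_X R m i).isUnit_one_add).unit

lemma one_add_sq_zero_pow {Q : Type*} [Ring Q] {x : Q} (hx : x * x = 0) (k : ℕ) :
    (1 + x) ^ k = 1 + (k : Q) * x := by
  induction k with
  | zero => simp
  | succ k ih =>
      rw [pow_succ, ih]
      have : (1 + (k : Q) * x) * (1 + x) = 1 + ((k : Q) + 1) * x + (k : Q) * (x * x) := by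
        noncomm_ring
      rw [this, hx]
      push_cast
      simp [add_comm]

lemma magnus_of_pow_n (m : ℕ) (n : ℕ) (i : Fin m) :
    magnus (ZMod n) m (FreeGroup.of i) ^ n = 1 := by
  ext
  have hx := ReducedFreeAlgebra.X_mul_X (ZMod n) m i
  have hval : ((magnus (ZMod n) m (FreeGroup.of i)) : ReducedFreeAlgebra (ZMod n) m)
      = 1 + ReducedFreeAlgebra.X (ZMod n) m i := by
    simp [magnus]
  have hn0 : ((n : ℕ) : ReducedFreeAlgebra (ZMod n) m) = 0 := by
    rw [show ((n : ℕ) : ReducedFreeAlgebra (ZMod n) m)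
        = algebraMap (ZMod n) _ ((n : ℕ) : ZMod n) by push_cast; rfl]
    simp
  simp only [Units.val_pow_eq_pow_val, hval, Units.val_one]
  rw [one_add_sq_zero_pow hx, hn0, zero_mul, add_zero]

/-- Over `ℤ/nℤ` (`n ≥ 2`), the Magnus expansion of the `n`-th power of a conjugate
`w⁻¹ xᵢ^ε w` of a generator is trivial: `E((w⁻¹ xᵢ^ε w)^n) = 1` in `Q_m(ℤ/nℤ)ˣ`. -/
theorem magnus_conj_pow_eq_one_mod (m : ℕ) (hm : 1 ≤ m) (n : ℕ) (hn : 2 ≤ n)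
    (w : FreeGroup (Fin m)) (i : Fin m) (ε : ℤ) (hε : ε = 1 ∨ ε = -1) :
    magnus (ZMod n) m ((w⁻¹ * FreeGroup.of i ^ ε * w) ^ n) = 1 := by
  have key := magnus_of_pow_n m n i
  set E := magnus (ZMod n) m
  rw [map_pow, map_mul, map_mul, map_inv, map_zpow]
  have hc := conj_pow (i := n) (a := (E w)⁻¹) (b := E (FreeGroup.of i) ^ ε)
  simp only [inv_inv] at hc
  rw [hc]
  rcases hε with h | h <;> subst h
  · simp [key]
  · simp [inv_pow, key]
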